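/- Given q > 2 and p ∈ (-1,∞) such that 0, 1, p, q are pairwise distinct, and given 0 < x₁ < x₂ < x₃, there exist unique α, β, γ ∈ ℝ such that g(x) = x^p − (α + βx + γx^q) vanishes exactly at x₁, x₂, x₃ on (0,∞); moreover g has sign pattern (+,−,+,−) on the successive intervals (0,x₁),(x₁,x₂),(x₂,x₃),(x₃,∞) if p ∈ (-1,0) ∪ (1,q), and sign pattern (−,+,−,+) if p ∈ (0,1) ∪ (q,∞). -/

import Mathlib

open Real Set Filter

/-- Two-term generalized polynomial with two distinct positive zeros is zero. -/
lemma two_term_zero {A B r u v : ℝ} (hr : 0 < r) (hu : 0 < u) (huv : u < v)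
    (h1 : A + B * u ^ r = 0) (h2 : A + B * v ^ r = 0) : A = 0 ∧ B = 0 := by
  have hlt : u ^ r < v ^ r := Real.rpow_lt_rpow hu.le huv hr
  have hB : B = 0 := by
    by_contra hB
    have : B * u ^ r = B * v ^ r := by linarith
    exact hlt.ne (mul_left_cancel₀ hB this)
  refine ⟨by simpa [hB] using h1, hB⟩

/-- sort three distinct points with a symmetric property -/
lemma exists_ordered {P : ℝ → Prop} {a b c : ℝ} (ha : P a) (hb : P b) (hc : P c)
    (hab : a ≠ b) (hac : a ≠ c) (hbc : b ≠ c) :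
    ∃ u v w, u < v ∧ v < w ∧ P u ∧ P v ∧ P w := by
  rcases hab.lt_or_gt with h1 | h1 <;> rcases hac.lt_or_gt with h2 | h2 <;>
    rcases hbc.lt_or_gt with h3 | h3
  · exact ⟨a, b, c, h1, h3, ha, hb, hc⟩
  · exact ⟨a, c, b, h2, h3, ha, hc, hb⟩
  · exact absurd (h2.trans (h1.trans h3)) (lt_irrefl c)
  · exact ⟨c, a, b, h2, h1, hc, ha, hb⟩
  · exact ⟨b, a, c, h1, h2, hb, ha, hc⟩
  · exact absurd ((h1.trans h2).trans h3) (lt_irrefl b)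
  · exact ⟨b, c, a, h3, h2, hb, hc, ha⟩
  · exact ⟨c, b, a, h3, h1, hc, hb, ha⟩


lemma contOn_rpow (r : ℝ) : ContinuousOn (fun x : ℝ => x ^ r) (Ioi 0) :=
  fun x hx => (Real.continuousAt_rpow_const x r (Or.inl (ne_of_gt hx))).continuousWithinAt

lemma contOn_F (p q a b c : ℝ) :
    ContinuousOn (fun x : ℝ => x ^ p - (a + b * x + c * x ^ q)) (Ioi 0) :=
  ((contOn_rpow p).sub ((continuousOn_const.add (continuousOn_const.mul continuousOn_id)).add
    (continuousOn_const.mul (contOn_rpow q))))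

lemma hasDerivAt_F (p q a b c : ℝ) {x : ℝ} (hx : 0 < x) :
    HasDerivAt (fun y : ℝ => y ^ p - (a + b * y + c * y ^ q))
      (p * x ^ (p - 1) - (b + c * (q * x ^ (q - 1)))) x := by
  have h1 : HasDerivAt (fun y : ℝ => y ^ p) (p * x ^ (p - 1)) x :=
    Real.hasDerivAt_rpow_const (Or.inl hx.ne')
  have h2 : HasDerivAt (fun y : ℝ => y ^ q) (q * x ^ (q - 1)) x :=
    Real.hasDerivAt_rpow_const (Or.inl hx.ne')
  have h3 : HasDerivAt (fun y : ℝ => a + b * y + c * y ^ q)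
      (0 + b * 1 + c * (q * x ^ (q - 1))) x :=
    (((hasDerivAt_const x a).add ((hasDerivAt_id x).const_mul b)).add (h2.const_mul c))
  refine (h1.sub h3).congr_deriv ?_
  ring

/-- Rolle on (0,∞): between two zeros of F there is a zero of F'. -/
lemma rolle_pos {F F' : ℝ → ℝ} (hd : ∀ x : ℝ, 0 < x → HasDerivAt F (F' x) x)
    {u v : ℝ} (hu : 0 < u) (huv : u < v) (hFu : F u = 0) (hFv : F v = 0) :
    ∃ t ∈ Ioo u v, F' t = 0 := by
  refine exists_hasDerivAt_eq_zero huv ?_ (hFu.trans hFv.symm) ?_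
  · exact fun x hx => (hd x (lt_of_lt_of_le hu hx.1)).continuousAt.continuousWithinAt
  · exact fun x hx => hd x (hu.trans hx.1)

/-- The derivative form p x^(p-1) - b - cq x^(q-1) has at most two positive zeros. -/
lemma deriv_form_zeros {p q : ℝ} (hq0 : 0 < q) (hp0 : p ≠ 0) (hp1 : p ≠ 1) (hpq : p ≠ q)
    (hq1 : 1 < q) (b c : ℝ) {u v w : ℝ} (hu : 0 < u) (huv : u < v) (hvw : v < w)
    (h1 : p * u ^ (p-1) - (b + c * (q * u ^ (q-1))) = 0)
    (h2 : p * v ^ (p-1) - (b + c * (q * v ^ (q-1))) = 0)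
    (h3 : p * w ^ (p-1) - (b + c * (q * w ^ (q-1))) = 0) : False := by
  set φ : ℝ → ℝ := fun x => p - b * x ^ (1-p) - c * q * x ^ (q-p) with hφ
  have hv : 0 < v := hu.trans huv
  have hw : 0 < w := hv.trans hvw
  have key : ∀ z : ℝ, 0 < z → p * z ^ (p-1) - (b + c * (q * z ^ (q-1))) = 0 → φ z = 0 := by
    intro z hz h
    have e1 : z ^ (1-p) * z ^ (p-1) = 1 := by
      rw [← Real.rpow_add hz]; norm_num
    have e2 : z ^ (1-p) * z ^ (q-1) = z ^ (q-p) := by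
      rw [← Real.rpow_add hz]; ring_nf
    have := congrArg (fun t => z ^ (1-p) * t) h
    simp only [mul_zero, mul_sub, mul_add] at this
    calc φ z = z ^ (1-p) * (p * z ^ (p-1)) - (z ^ (1-p) * b + z ^ (1-p) * (c * (q * z ^ (q-1)))) := by
          simp only [hφ]
          rw [show z ^ (1-p) * (p * z ^ (p-1)) = p * (z ^ (1-p) * z ^ (p-1)) by ring, e1,
            show z ^ (1-p) * (c * (q * z ^ (q-1))) = c * q * (z ^ (1-p) * z ^ (q-1)) by ring, e2]
          ring
      _ = 0 := this
  have hφd : ∀ x : ℝ, 0 < x → HasDerivAt φ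
      (-(b * ((1-p) * x ^ (1-p-1))) - c * q * ((q-p) * x ^ (q-p-1))) x := by
    intro x hx
    have d1 : HasDerivAt (fun y : ℝ => y ^ (1-p)) ((1-p) * x ^ (1-p-1)) x :=
      Real.hasDerivAt_rpow_const (Or.inl hx.ne')
    have d2 : HasDerivAt (fun y : ℝ => y ^ (q-p)) ((q-p) * x ^ (q-p-1)) x :=
      Real.hasDerivAt_rpow_const (Or.inl hx.ne')
    have := ((hasDerivAt_const x p).sub (d1.const_mul b)).sub (d2.const_mul (c * q))
    refine this.congr_deriv ?_
    ring
  obtain ⟨s, hs, hs0⟩ := rolle_pos hφd hu huv (key u hu h1) (key v hv h2)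
  obtain ⟨t, ht, ht0⟩ := rolle_pos hφd hv hvw (key v hv h2) (key w hw h3)
  have hspos : 0 < s := hu.trans hs.1
  have htpos : 0 < t := hv.trans ht.1
  -- multiply by x^p : ψ z = -(b*(1-p)) + (-(c*q*(q-p))) * z^(q-1)
  have keyψ : ∀ z : ℝ, 0 < z →
      -(b * ((1-p) * z ^ (1-p-1))) - c * q * ((q-p) * z ^ (q-p-1)) = 0 →
      -(b * (1-p)) + (-(c * q * (q-p))) * z ^ (q-1) = 0 := by
    intro z hz h
    have e1 : z ^ p * z ^ (1-p-1) = 1 := by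
      rw [← Real.rpow_add hz]
      norm_num
    have e2 : z ^ p * z ^ (q-p-1) = z ^ (q-1) := by
      rw [← Real.rpow_add hz]; ring_nf
    have h2 := congrArg (fun t => z ^ p * t) h
    simp only [mul_zero] at h2
    calc -(b * (1-p)) + (-(c * q * (q-p))) * z ^ (q-1)
        = z ^ p * (-(b * ((1-p) * z ^ (1-p-1))) - c * q * ((q-p) * z ^ (q-p-1))) := by
          rw [show z ^ p * (-(b * ((1-p) * z ^ (1-p-1))) - c * q * ((q-p) * z ^ (q-p-1)))
            = -(b * (1-p)) * (z ^ p * z ^ (1-p-1)) - c * q * (q-p) * (z ^ p * z ^ (q-p-1)) by ring,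
            e1, e2]
          ring
      _ = 0 := h2
  obtain ⟨hA, hB⟩ := two_term_zero (by linarith : (0:ℝ) < q - 1) hspos
    (show s < t from hs.2.trans ht.1) (keyψ s hspos hs0) (keyψ t htpos ht0)
  have hb : b = 0 := by
    rcases mul_eq_zero.mp (neg_eq_zero.mp hA) with h | h
    · exact h
    · exact absurd (by linarith : p = 1) hp1
  have hc : c = 0 := by
    have := neg_eq_zero.mp hB
    rcases mul_eq_zero.mp this with h | h
    · rcases mul_eq_zero.mp h with h' | h'
      · exact h'
      · exact absurd h' (ne_of_gt hq0)
    · exact absurd (by linarith : p = q) hpq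
  have : φ u = p := by simp [hφ, hb, hc]
  rw [key u hu h1] at this
  exact hp0 this.symm

/-- Derivative-form zeros: unordered version for three pairwise distinct points. -/
lemma deriv_form_zeros' {p q : ℝ} (hq0 : 0 < q) (hp0 : p ≠ 0) (hp1 : p ≠ 1) (hpq : p ≠ q)
    (hq1 : 1 < q) (b c : ℝ) {u v w : ℝ} (hu : 0 < u) (hv : 0 < v) (hw : 0 < w)
    (huv : u ≠ v) (huw : u ≠ w) (hvw : v ≠ w)
    (h1 : p * u ^ (p-1) - (b + c * (q * u ^ (q-1))) = 0)
    (h2 : p * v ^ (p-1) - (b + c * (q * v ^ (q-1))) = 0)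
    (h3 : p * w ^ (p-1) - (b + c * (q * w ^ (q-1))) = 0) : False := by
  obtain ⟨u', v', w', h1', h2', hu', hv', hw'⟩ := exists_ordered
    (P := fun z => 0 < z ∧ p * z ^ (p-1) - (b + c * (q * z ^ (q-1))) = 0)
    ⟨hu, h1⟩ ⟨hv, h2⟩ ⟨hw, h3⟩ huv huw hvw
  exact deriv_form_zeros hq0 hp0 hp1 hpq hq1 b c hu'.1 h1' h2' hu'.2 hv'.2 hw'.2

/-- F = x^p - (a + bx + cx^q) has at most three positive zeros. -/
lemma F_four_zeros {p q : ℝ} (hq0 : 0 < q) (hp0 : p ≠ 0) (hp1 : p ≠ 1) (hpq : p ≠ q)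
    (hq1 : 1 < q) (a b c : ℝ) {u₁ u₂ u₃ u₄ : ℝ} (h0 : 0 < u₁) (h12 : u₁ < u₂)
    (h23 : u₂ < u₃) (h34 : u₃ < u₄)
    (e1 : u₁ ^ p - (a + b * u₁ + c * u₁ ^ q) = 0)
    (e2 : u₂ ^ p - (a + b * u₂ + c * u₂ ^ q) = 0)
    (e3 : u₃ ^ p - (a + b * u₃ + c * u₃ ^ q) = 0)
    (e4 : u₄ ^ p - (a + b * u₄ + c * u₄ ^ q) = 0) : False := by
  have hd := fun x (hx : (0:ℝ) < x) => hasDerivAt_F p q a b c hx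
  obtain ⟨t₁, ht₁, k₁⟩ := rolle_pos hd h0 h12 e1 e2
  obtain ⟨t₂, ht₂, k₂⟩ := rolle_pos hd (h0.trans h12) h23 e2 e3
  obtain ⟨t₃, ht₃, k₃⟩ := rolle_pos hd (h0.trans (h12.trans h23)) h34 e3 e4
  exact deriv_form_zeros hq0 hp0 hp1 hpq hq1 b c (h0.trans ht₁.1)
    (ht₁.2.trans ht₂.1) (ht₂.2.trans ht₃.1) k₁ k₂ k₃

/-- a + bx + cx^q with three positive zeros is identically zero. -/
lemma lin_three_zeros {q : ℝ} (hq0 : 0 < q) (hq1 : 1 < q) (a b c : ℝ)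
    {u v w : ℝ} (hu : 0 < u) (huv : u < v) (hvw : v < w)
    (e1 : a + b * u + c * u ^ q = 0) (e2 : a + b * v + c * v ^ q = 0)
    (e3 : a + b * w + c * w ^ q = 0) : a = 0 ∧ b = 0 ∧ c = 0 := by
  have hd : ∀ x : ℝ, 0 < x → HasDerivAt (fun y : ℝ => a + b * y + c * y ^ q)
      (b + c * q * x ^ (q-1)) x := by
    intro x hx
    have h2 : HasDerivAt (fun y : ℝ => y ^ q) (q * x ^ (q-1)) x :=
      Real.hasDerivAt_rpow_const (Or.inl hx.ne')
    have := (((hasDerivAt_const x a).add ((hasDerivAt_id x).const_mul b)).add (h2.const_mul c))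
    refine this.congr_deriv ?_; ring
  obtain ⟨s, hs, hs0⟩ := rolle_pos hd hu huv e1 e2
  obtain ⟨t, ht, ht0⟩ := rolle_pos hd (hu.trans huv) hvw e2 e3
  have hA : b + c * q * s ^ (q-1) = 0 := hs0
  obtain ⟨hb, hcq⟩ := two_term_zero (by linarith : (0:ℝ) < q - 1) (hu.trans hs.1)
    (hs.2.trans ht.1) (by linarith [hs0] : b + c * q * s ^ (q-1) = 0) (by linarith [ht0])
  have hc : c = 0 := by
    rcases mul_eq_zero.mp hcq with h | h
    · exact h
    · exact absurd h (ne_of_gt hq0)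
  refine ⟨?_, hb, hc⟩
  have := e1; rw [hb, hc] at this; simpa using this

/-- Existence of interpolation coefficients. -/
lemma interp_exists {q : ℝ} (hq0 : 0 < q) (hq1 : 1 < q) {x₁ x₂ x₃ : ℝ}
    (h1 : 0 < x₁) (h12 : x₁ < x₂) (h23 : x₂ < x₃) (y₁ y₂ y₃ : ℝ) :
    ∃ a b c : ℝ, a + b * x₁ + c * x₁ ^ q = y₁ ∧ a + b * x₂ + c * x₂ ^ q = y₂ ∧
      a + b * x₃ + c * x₃ ^ q = y₃ := by
  let L : (ℝ × ℝ × ℝ) →ₗ[ℝ] (ℝ × ℝ × ℝ) :=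
    { toFun := fun v => (v.1 + v.2.1 * x₁ + v.2.2 * x₁ ^ q,
        v.1 + v.2.1 * x₂ + v.2.2 * x₂ ^ q, v.1 + v.2.1 * x₃ + v.2.2 * x₃ ^ q)
      map_add' := by intro v w; simp [Prod.ext_iff]; refine ⟨by ring, by ring, by ring⟩
      map_smul' := by intro m v; simp [Prod.ext_iff]; refine ⟨by ring, by ring, by ring⟩ }
  have hinj : Function.Injective L := by
    rw [injective_iff_map_eq_zero]
    intro v hv
    simp only [L, LinearMap.coe_mk, AddHom.coe_mk, Prod.mk_eq_zero] at hv
    obtain ⟨ha, hb, hc⟩ := lin_three_zeros hq0 hq1 v.1 v.2.1 v.2.2 h1 h12 h23 hv.1 hv.2.1 hv.2.2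
    exact Prod.ext ha (Prod.ext hb hc)
  obtain ⟨v, hv⟩ := (LinearMap.injective_iff_surjective.mp hinj) (y₁, y₂, y₃)
  refine ⟨v.1, v.2.1, v.2.2, ?_, ?_, ?_⟩
  · exact congrArg Prod.fst hv
  · exact congrArg (Prod.fst ∘ Prod.snd) hv
  · exact congrArg (Prod.snd ∘ Prod.snd) hv

/-- Sign constancy on a zero-free ordConnected subset of (0,∞). -/
lemma sign_const {F : ℝ → ℝ} (hF : ContinuousOn F (Ioi 0)) {I : Set ℝ}
    (hIc : OrdConnected I) (hI : I ⊆ Ioi 0) (hnz : ∀ x ∈ I, F x ≠ 0)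
    {a b : ℝ} (ha : a ∈ I) (hb : b ∈ I) (hFa : 0 < F a) : 0 < F b := by
  by_contra hFb
  have hFb' : F b < 0 := lt_of_le_of_ne (not_lt.mp hFb) (hnz b hb)
  have hsub : uIcc a b ⊆ I := hIc.uIcc_subset ha hb
  have : (0:ℝ) ∈ uIcc (F a) (F b) := by
    rw [Set.mem_uIcc]; right; exact ⟨hFb'.le, hFa.le⟩
  obtain ⟨x, hx, hx0⟩ := intermediate_value_uIcc (hF.mono (hsub.trans hI)) this
  exact hnz x (hsub hx) hx0

/-- No local extremum with nonzero derivative: sign must flip at a simple zero. -/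
lemma not_same_sign {F : ℝ → ℝ} {d z l r : ℝ} (hd : HasDerivAt F d z) (hdne : d ≠ 0)
    (hFz : F z = 0) (hl : l < z) (hr : z < r)
    (hss : ((∀ x ∈ Ioo l z, 0 < F x) ∧ (∀ x ∈ Ioo z r, 0 < F x)) ∨
      ((∀ x ∈ Ioo l z, F x < 0) ∧ (∀ x ∈ Ioo z r, F x < 0))) : False := by
  have hmem : Ioo l r ∈ nhds z := Ioo_mem_nhds hl hr
  rcases hss with ⟨hL, hR⟩ | ⟨hL, hR⟩
  · have : IsLocalMin F z := by
      filter_upwards [hmem] with y hy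
      rcases lt_trichotomy y z with h | h | h
      · exact hFz.le.trans (hL y ⟨hy.1, h⟩).le
      · exact le_of_eq (by rw [h])
      · exact hFz.le.trans (hR y ⟨h, hy.2⟩).le
    exact hdne (this.hasDerivAt_eq_zero hd)
  · have : IsLocalMax F z := by
      filter_upwards [hmem] with y hy
      rcases lt_trichotomy y z with h | h | h
      · exact (hL y ⟨hy.1, h⟩).le.trans hFz.ge
      · exact le_of_eq (by rw [h])
      · exact (hR y ⟨h, hy.2⟩).le.trans hFz.ge
    exact hdne (this.hasDerivAt_eq_zero hd)

/-- Master sign-pattern lemma: the sign alternates across x₁, x₂, x₃. -/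
lemma sign_pattern {p q x₁ x₂ x₃ : ℝ} (hq2 : 2 < q) (hp0 : p ≠ 0) (hp1 : p ≠ 1) (hpq : p ≠ q)
    (h1 : 0 < x₁) (h12 : x₁ < x₂) (h23 : x₂ < x₃) (a b c : ℝ)
    (hiff : ∀ x : ℝ, 0 < x →
      (x ^ p - (a + b * x + c * x ^ q) = 0 ↔ x = x₁ ∨ x = x₂ ∨ x = x₃)) :
    ((∀ x ∈ Ioo 0 x₁, 0 < x ^ p - (a + b * x + c * x ^ q)) ∧
     (∀ x ∈ Ioo x₁ x₂, x ^ p - (a + b * x + c * x ^ q) < 0) ∧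
     (∀ x ∈ Ioo x₂ x₃, 0 < x ^ p - (a + b * x + c * x ^ q)) ∧
     (∀ x ∈ Ioi x₃, x ^ p - (a + b * x + c * x ^ q) < 0)) ∨
    ((∀ x ∈ Ioo 0 x₁, x ^ p - (a + b * x + c * x ^ q) < 0) ∧
     (∀ x ∈ Ioo x₁ x₂, 0 < x ^ p - (a + b * x + c * x ^ q)) ∧
     (∀ x ∈ Ioo x₂ x₃, x ^ p - (a + b * x + c * x ^ q) < 0) ∧
     (∀ x ∈ Ioi x₃, 0 < x ^ p - (a + b * x + c * x ^ q))) := by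
  have hq0 : (0:ℝ) < q := by linarith
  have hq1 : (1:ℝ) < q := by linarith
  set F : ℝ → ℝ := fun x => x ^ p - (a + b * x + c * x ^ q) with hF
  have h2 : 0 < x₂ := h1.trans h12
  have h3 : 0 < x₃ := h2.trans h23
  have e₁ : F x₁ = 0 := (hiff x₁ h1).mpr (Or.inl rfl)
  have e₂ : F x₂ = 0 := (hiff x₂ h2).mpr (Or.inr (Or.inl rfl))
  have e₃ : F x₃ = 0 := (hiff x₃ h3).mpr (Or.inr (Or.inr rfl))
  have hd := fun x (hx : (0:ℝ) < x) => hasDerivAt_F p q a b c hx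
  have hcont : ContinuousOn F (Ioi 0) := contOn_F p q a b c
  -- Rolle zeros of F'
  obtain ⟨s₁, hs₁, k₁⟩ := rolle_pos hd h1 h12 e₁ e₂
  obtain ⟨s₂, hs₂, k₂⟩ := rolle_pos hd h2 h23 e₂ e₃
  -- simple zeros
  have simp₁ : p * x₁ ^ (p-1) - (b + c * (q * x₁ ^ (q-1))) ≠ 0 := fun h =>
    deriv_form_zeros hq0 hp0 hp1 hpq hq1 b c h1 hs₁.1 (hs₁.2.trans hs₂.1) h k₁ k₂
  have simp₂ : p * x₂ ^ (p-1) - (b + c * (q * x₂ ^ (q-1))) ≠ 0 := fun h =>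
    deriv_form_zeros hq0 hp0 hp1 hpq hq1 b c (h1.trans hs₁.1) hs₁.2 hs₂.1 k₁ h k₂
  have simp₃ : p * x₃ ^ (p-1) - (b + c * (q * x₃ ^ (q-1))) ≠ 0 := fun h =>
    deriv_form_zeros hq0 hp0 hp1 hpq hq1 b c (h1.trans hs₁.1) (hs₁.2.trans hs₂.1) hs₂.2 k₁ k₂ h
  -- zero-free intervals
  have nz₀ : ∀ x ∈ Ioo 0 x₁, F x ≠ 0 := by
    intro x hx h
    rcases (hiff x hx.1).mp h with h' | h' | h' <;>
      [exact hx.2.ne h'; exact (hx.2.trans h12).ne h'; exact (hx.2.trans (h12.trans h23)).ne h']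
  have nz₁ : ∀ x ∈ Ioo x₁ x₂, F x ≠ 0 := by
    intro x hx h
    rcases (hiff x (h1.trans hx.1)).mp h with h' | h' | h' <;>
      [exact hx.1.ne' h'; exact hx.2.ne h'; exact (hx.2.trans h23).ne h']
  have nz₂ : ∀ x ∈ Ioo x₂ x₃, F x ≠ 0 := by
    intro x hx h
    rcases (hiff x (h2.trans hx.1)).mp h with h' | h' | h' <;>
      [exact (h12.trans hx.1).ne' h'; exact hx.1.ne' h'; exact hx.2.ne h']
  have nz₃ : ∀ x ∈ Ioi x₃, F x ≠ 0 := by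
    intro x hx h
    rcases (hiff x (h3.trans hx)).mp h with h' | h' | h' <;>
      [exact ((h12.trans h23).trans hx).ne' h'; exact (h23.trans hx).ne' h'; exact hx.ne' h']
  -- sign constancy
  have sub₀ : Ioo (0:ℝ) x₁ ⊆ Ioi 0 := fun x hx => hx.1
  have sub₁ : Ioo x₁ x₂ ⊆ Ioi (0:ℝ) := fun x hx => h1.trans hx.1
  have sub₂ : Ioo x₂ x₃ ⊆ Ioi (0:ℝ) := fun x hx => h2.trans hx.1
  have sub₃ : Ioi x₃ ⊆ Ioi (0:ℝ) := fun x hx => h3.trans hx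
  have const₀ := fun {u v} (hu : u ∈ Ioo (0:ℝ) x₁) (hv : v ∈ Ioo (0:ℝ) x₁) (h : 0 < F u) =>
    sign_const hcont Set.ordConnected_Ioo sub₀ nz₀ hu hv h
  have const₁ := fun {u v} (hu : u ∈ Ioo x₁ x₂) (hv : v ∈ Ioo x₁ x₂) (h : 0 < F u) =>
    sign_const hcont Set.ordConnected_Ioo sub₁ nz₁ hu hv h
  have const₂ := fun {u v} (hu : u ∈ Ioo x₂ x₃) (hv : v ∈ Ioo x₂ x₃) (h : 0 < F u) =>
    sign_const hcont Set.ordConnected_Ioo sub₂ nz₂ hu hv h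
  have const₃ := fun {u v} (hu : u ∈ Ioi x₃) (hv : v ∈ Ioi x₃) (h : 0 < F u) =>
    sign_const hcont Set.ordConnected_Ioi sub₃ nz₃ hu hv h
  -- sample points
  have m₀ : x₁/2 ∈ Ioo (0:ℝ) x₁ := ⟨by linarith, by linarith⟩
  have m₁ : (x₁+x₂)/2 ∈ Ioo x₁ x₂ := ⟨by linarith, by linarith⟩
  have m₂ : (x₂+x₃)/2 ∈ Ioo x₂ x₃ := ⟨by linarith, by linarith⟩
  have m₃ : x₃+1 ∈ Ioi x₃ := by simp [mem_Ioi]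
  -- each interval: either all pos or all neg
  have dicho : ∀ (I : Set ℝ), OrdConnected I → I ⊆ Ioi 0 → (∀ x ∈ I, F x ≠ 0) →
      ∀ u ∈ I, (0 < F u → ∀ x ∈ I, 0 < F x) ∧ (F u < 0 → ∀ x ∈ I, F x < 0) := by
    intro I hIc hI hnz u hu
    constructor
    · intro h x hx; exact sign_const hcont hIc hI hnz hu hx h
    · intro h x hx
      by_contra hx'
      have : 0 < F x := lt_of_le_of_ne (not_lt.mp hx') (Ne.symm (hnz x hx))
      exact absurd (sign_const hcont hIc hI hnz hx hu this) (by linarith)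
  have D₀ := dicho _ Set.ordConnected_Ioo sub₀ nz₀ _ m₀
  have D₁ := dicho _ Set.ordConnected_Ioo sub₁ nz₁ _ m₁
  have D₂ := dicho _ Set.ordConnected_Ioo sub₂ nz₂ _ m₂
  have D₃ := dicho _ Set.ordConnected_Ioi sub₃ nz₃ _ m₃
  -- alternation steps
  have flip₁ : ∀ (hL : ∀ x ∈ Ioo 0 x₁, 0 < F x), ∀ x ∈ Ioo x₁ x₂, F x < 0 := by
    intro hL
    refine D₁.2 ?_
    rcases lt_or_gt_of_ne (nz₁ _ m₁) with h | h
    · exact h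
    exfalso
    exact not_same_sign (hd x₁ h1) simp₁ e₁ h1 h12 (Or.inl ⟨hL, D₁.1 h⟩)
  have flip₁' : ∀ (hL : ∀ x ∈ Ioo 0 x₁, F x < 0), ∀ x ∈ Ioo x₁ x₂, 0 < F x := by
    intro hL
    refine D₁.1 ?_
    rcases lt_or_gt_of_ne (nz₁ _ m₁) with h | h
    · exact absurd (not_same_sign (hd x₁ h1) simp₁ e₁ h1 h12
        (Or.inr ⟨hL, D₁.2 h⟩)) not_false
    · exact h
  have flip₂ : ∀ (hL : ∀ x ∈ Ioo x₁ x₂, 0 < F x), ∀ x ∈ Ioo x₂ x₃, F x < 0 := by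
    intro hL
    refine D₂.2 ?_
    rcases lt_or_gt_of_ne (nz₂ _ m₂) with h | h
    · exact h
    exfalso
    exact not_same_sign (hd x₂ h2) simp₂ e₂ h12 h23 (Or.inl ⟨hL, D₂.1 h⟩)
  have flip₂' : ∀ (hL : ∀ x ∈ Ioo x₁ x₂, F x < 0), ∀ x ∈ Ioo x₂ x₃, 0 < F x := by
    intro hL
    refine D₂.1 ?_
    rcases lt_or_gt_of_ne (nz₂ _ m₂) with h | h
    · exact absurd (not_same_sign (hd x₂ h2) simp₂ e₂ h12 h23
        (Or.inr ⟨hL, D₂.2 h⟩)) not_false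
    · exact h
  have flip₃ : ∀ (hL : ∀ x ∈ Ioo x₂ x₃, 0 < F x), ∀ x ∈ Ioi x₃, F x < 0 := by
    intro hL
    refine D₃.2 ?_
    rcases lt_or_gt_of_ne (nz₃ _ m₃) with h | h
    · exact h
    exfalso
    have hall := D₃.1 h
    exact not_same_sign (hd x₃ h3) simp₃ e₃ h23 (lt_add_one x₃)
      (Or.inl ⟨hL, fun x hx => hall x (mem_Ioi.mpr hx.1)⟩)
  have flip₃' : ∀ (hL : ∀ x ∈ Ioo x₂ x₃, F x < 0), ∀ x ∈ Ioi x₃, 0 < F x := by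
    intro hL
    refine D₃.1 ?_
    rcases lt_or_gt_of_ne (nz₃ _ m₃) with h | h
    · exact absurd (not_same_sign (hd x₃ h3) simp₃ e₃ h23 (lt_add_one x₃)
        (Or.inr ⟨hL, fun x hx => D₃.2 h x (mem_Ioi.mpr hx.1)⟩)) not_false
    · exact h
  rcases lt_or_gt_of_ne (nz₀ _ m₀) with h | h
  · right
    have P₀ := D₀.2 h
    have P₁ := flip₁' P₀
    have P₂ := flip₂ P₁
    exact ⟨P₀, P₁, P₂, flip₃' P₂⟩
  · left
    have P₀ := D₀.1 h
    have P₁ := flip₁ P₀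
    have P₂ := flip₂' P₁
    exact ⟨P₀, P₁, P₂, flip₃ P₂⟩

/-- x^r → 0 as x → 0⁺ for r > 0. -/
lemma rpow_tendsto_zero {r : ℝ} (hr : 0 < r) :
    Tendsto (fun x : ℝ => x ^ r) (nhdsWithin 0 (Ioi 0)) (nhds 0) := by
  have h := (Real.continuousAt_rpow_const 0 r (Or.inr hr.le)).tendsto
  rw [Real.zero_rpow hr.ne'] at h
  exact h.mono_left nhdsWithin_le_nhds

/-- x^p → ∞ as x → 0⁺ for p < 0. -/
lemma rpow_tendsto_atTop_zero {p : ℝ} (hp : p < 0) :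
    Tendsto (fun x : ℝ => x ^ p) (nhdsWithin 0 (Ioi 0)) atTop := by
  have h := (tendsto_rpow_atTop (neg_pos.2 hp)).comp tendsto_inv_nhdsGT_zero
  refine h.congr' ?_
  filter_upwards [self_mem_nhdsWithin] with x (hx : 0 < x)
  simp only [Function.comp]
  rw [← Real.rpow_neg_one x, ← Real.rpow_mul hx.le]
  norm_num

/-- x^r → 0 as x → ∞ for r < 0. -/
lemma rpow_tendsto_zero_atTop {r : ℝ} (hr : r < 0) :
    Tendsto (fun x : ℝ => x ^ r) atTop (nhds 0) := by
  have := tendsto_rpow_neg_atTop (neg_pos.2 hr)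
  simpa using this

/-- Case p < 0 : F is positive somewhere in (0, x₁). -/
lemma sample_neg_p {p q a b c x₁ : ℝ} (hp : p < 0) (hq0 : 0 < q) (h1 : 0 < x₁) :
    ∃ t ∈ Ioo 0 x₁, 0 < t ^ p - (a + b * t + c * t ^ q) := by
  have hstuff : Tendsto (fun x : ℝ => a + b * x + c * x ^ q) (nhdsWithin 0 (Ioi 0))
      (nhds (a + b * 0 + c * 0)) := by
    refine Tendsto.add (Tendsto.add tendsto_const_nhds ?_) ((rpow_tendsto_zero hq0).const_mul c)
    exact ((continuous_id.tendsto 0).const_mul b).mono_left nhdsWithin_le_nhds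
  have hev1 : ∀ᶠ x in nhdsWithin 0 (Ioi 0), a + b * x + c * x ^ q < |a| + 1 :=
    hstuff.eventually_lt_const (by simp; linarith [le_abs_self a])
  have hev2 : ∀ᶠ x in nhdsWithin 0 (Ioi 0), |a| + 1 < x ^ p :=
    (rpow_tendsto_atTop_zero hp).eventually_gt_atTop _
  have hev3 : Ioo (0:ℝ) x₁ ∈ nhdsWithin 0 (Ioi 0) :=
    Ioo_mem_nhdsGT_of_mem ⟨le_refl 0, h1⟩
  obtain ⟨t, ht3, ht1, ht2⟩ := ((Filter.eventually_of_mem hev3 (fun x hx => hx)).and (hev1.and hev2)).exists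
  exact ⟨t, ht3, by linarith⟩

/-- Case q < p : F is positive somewhere in (x₃, ∞). -/
lemma sample_big_p {p q a b c x₃ : ℝ} (hq2 : 2 < q) (hqp : q < p) :
    ∃ t ∈ Ioi x₃, 0 < t ^ p - (a + b * t + c * t ^ q) := by
  set G : ℝ → ℝ := fun x => 1 - a * x ^ (-p) - b * x ^ (1-p) - c * x ^ (q-p) with hG
  have hGlim : Tendsto G atTop (nhds (1 - a * 0 - b * 0 - c * 0)) := by
    refine ((tendsto_const_nhds.sub ((rpow_tendsto_zero_atTop (by linarith)).const_mul a)).sub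
      ((rpow_tendsto_zero_atTop (by linarith)).const_mul b)).sub
      ((rpow_tendsto_zero_atTop (by linarith)).const_mul c)
  have hev1 : ∀ᶠ x in atTop, (1:ℝ)/2 < G x := by
    refine hGlim.eventually_const_lt (by norm_num)
  have hev2 : ∀ᶠ x : ℝ in atTop, max x₃ 0 < x := eventually_gt_atTop _
  obtain ⟨t, ht1, ht2⟩ := (hev1.and hev2).exists
  have htpos : 0 < t := (le_max_right x₃ 0).trans_lt ht2
  have hFG : t ^ p - (a + b * t + c * t ^ q) = t ^ p * G t := by
    have i1 : t ^ p * t ^ (-p) = 1 := by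
      rw [← Real.rpow_add htpos]; norm_num
    have i2 : t ^ p * t ^ (1-p) = t := by
      rw [← Real.rpow_add htpos]; norm_num
    have i3 : t ^ p * t ^ (q-p) = t ^ q := by
      rw [← Real.rpow_add htpos]; ring_nf
    simp only [hG]
    rw [show t ^ p * (1 - a * t ^ (-p) - b * t ^ (1-p) - c * t ^ (q-p)) =
      t ^ p - a * (t ^ p * t ^ (-p)) - b * (t ^ p * t ^ (1-p)) - c * (t ^ p * t ^ (q-p)) by ring,
      i1, i2, i3]
    ring
  refine ⟨t, (le_max_left x₃ 0).trans_lt ht2, ?_⟩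
  rw [hFG]
  exact mul_pos (Real.rpow_pos_of_pos htpos p) (lt_trans (by norm_num) ht1)

/-- Case 1 < p < q : the top coefficient c is positive. -/
lemma c_pos {p q x₁ x₂ x₃ a b c : ℝ} (hq2 : 2 < q) (hp1 : 1 < p) (hpq : p < q)
    (h1 : 0 < x₁) (h12 : x₁ < x₂) (h23 : x₂ < x₃)
    (e₁ : x₁ ^ p - (a + b * x₁ + c * x₁ ^ q) = 0)
    (e₂ : x₂ ^ p - (a + b * x₂ + c * x₂ ^ q) = 0)
    (e₃ : x₃ ^ p - (a + b * x₃ + c * x₃ ^ q) = 0) : 0 < c := by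
  have h2 : 0 < x₂ := h1.trans h12
  have h3 : 0 < x₃ := h2.trans h23
  set k : ℝ → ℝ := fun x => x ^ (p-1) - a * x ^ (-1:ℝ) - b - c * x ^ (q-1) with hk
  have hkz : ∀ z : ℝ, 0 < z → z ^ p - (a + b * z + c * z ^ q) = 0 → k z = 0 := by
    intro z hz h
    have i1 : z * z ^ (p-1) = z ^ p := by
      nth_rewrite 1 [← Real.rpow_one z]
      rw [← Real.rpow_add hz]; norm_num
    have i2 : z * z ^ (-1:ℝ) = 1 := by
      nth_rewrite 1 [← Real.rpow_one z]
      rw [← Real.rpow_add hz]; norm_num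
    have i3 : z * z ^ (q-1) = z ^ q := by
      nth_rewrite 1 [← Real.rpow_one z]
      rw [← Real.rpow_add hz]; norm_num
    have key : z * k z = z ^ p - (a + b * z + c * z ^ q) := by
      simp only [hk]
      rw [show z * (z ^ (p-1) - a * z ^ (-1:ℝ) - b - c * z ^ (q-1)) =
        z * z ^ (p-1) - a * (z * z ^ (-1:ℝ)) - b * z - c * (z * z ^ (q-1)) by ring, i1, i2, i3]
      ring
    have : z * k z = 0 := by rw [key, h]
    exact (mul_eq_zero.mp this).resolve_left hz.ne'
  have hkd : ∀ x : ℝ, 0 < x → HasDerivAt k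
      ((p-1) * x ^ (p-1-1) - a * ((-1) * x ^ ((-1:ℝ)-1)) - c * ((q-1) * x ^ (q-1-1))) x := by
    intro x hx
    have d1 : HasDerivAt (fun y : ℝ => y ^ (p-1)) ((p-1) * x ^ (p-1-1)) x :=
      Real.hasDerivAt_rpow_const (Or.inl hx.ne')
    have d2 : HasDerivAt (fun y : ℝ => y ^ (-1:ℝ)) ((-1) * x ^ ((-1:ℝ)-1)) x :=
      Real.hasDerivAt_rpow_const (Or.inl hx.ne')
    have d3 : HasDerivAt (fun y : ℝ => y ^ (q-1)) ((q-1) * x ^ (q-1-1)) x :=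
      Real.hasDerivAt_rpow_const (Or.inl hx.ne')
    have := ((d1.sub (d2.const_mul a)).sub (hasDerivAt_const x b)).sub (d3.const_mul c)
    refine this.congr_deriv ?_
    ring
  obtain ⟨s₁, hs₁, k₁⟩ := rolle_pos hkd h1 h12 (hkz x₁ h1 e₁) (hkz x₂ h2 e₂)
  obtain ⟨s₂, hs₂, k₂⟩ := rolle_pos hkd h2 h23 (hkz x₂ h2 e₂) (hkz x₃ h3 e₃)
  set m : ℝ → ℝ := fun z => (p-1) * z ^ p + a - c * (q-1) * z ^ q with hm
  have hmz : ∀ z : ℝ, 0 < z →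
      (p-1) * z ^ (p-1-1) - a * ((-1) * z ^ ((-1:ℝ)-1)) - c * ((q-1) * z ^ (q-1-1)) = 0 →
      m z = 0 := by
    intro z hz h
    have i1 : z ^ (2:ℝ) * z ^ (p-1-1) = z ^ p := by
      rw [← Real.rpow_add hz]; ring_nf
    have i2 : z ^ (2:ℝ) * z ^ ((-1:ℝ)-1) = 1 := by
      rw [← Real.rpow_add hz]; norm_num
    have i3 : z ^ (2:ℝ) * z ^ (q-1-1) = z ^ q := by
      rw [← Real.rpow_add hz]; ring_nf
    have key : z ^ (2:ℝ) * ((p-1) * z ^ (p-1-1) - a * ((-1) * z ^ ((-1:ℝ)-1))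
        - c * ((q-1) * z ^ (q-1-1))) = m z := by
      rw [show z ^ (2:ℝ) * ((p-1) * z ^ (p-1-1) - a * ((-1) * z ^ ((-1:ℝ)-1))
          - c * ((q-1) * z ^ (q-1-1))) = (p-1) * (z ^ (2:ℝ) * z ^ (p-1-1))
          + a * (z ^ (2:ℝ) * z ^ ((-1:ℝ)-1)) - c * (q-1) * (z ^ (2:ℝ) * z ^ (q-1-1)) by ring,
        i1, i2, i3]
      simp only [hm]
      ring
    rw [← key, h, mul_zero]
  have hmd : ∀ x : ℝ, 0 < x → HasDerivAt m
      ((p-1) * (p * x ^ (p-1)) - c * (q-1) * (q * x ^ (q-1))) x := by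
    intro x hx
    have d1 : HasDerivAt (fun y : ℝ => y ^ p) (p * x ^ (p-1)) x :=
      Real.hasDerivAt_rpow_const (Or.inl hx.ne')
    have d2 : HasDerivAt (fun y : ℝ => y ^ q) (q * x ^ (q-1)) x :=
      Real.hasDerivAt_rpow_const (Or.inl hx.ne')
    have := ((d1.const_mul (p-1)).add (hasDerivAt_const x a)).sub (d2.const_mul (c * (q-1)))
    refine this.congr_deriv ?_
    ring
  have hs₁pos : 0 < s₁ := h1.trans hs₁.1
  have hs₂pos : 0 < s₂ := h2.trans hs₂.1
  obtain ⟨t, ht, kt⟩ := rolle_pos hmd hs₁pos (hs₁.2.trans hs₂.1)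
    (hmz s₁ hs₁pos k₁) (hmz s₂ hs₂pos k₂)
  have htpos : 0 < t := hs₁pos.trans ht.1
  have hL : 0 < (p-1) * (p * t ^ (p-1)) :=
    mul_pos (by linarith) (mul_pos (by linarith) (Real.rpow_pos_of_pos htpos _))
  have hR : 0 < t ^ (q-1) := Real.rpow_pos_of_pos htpos _
  nlinarith [kt, hL, mul_pos (mul_pos (show (0:ℝ) < q-1 by linarith) (show (0:ℝ) < q by linarith)) hR]

/-- If c > 0 and p < q : F is negative somewhere in (x₃, ∞). -/
lemma sample_c_pos {p q a b c x₃ : ℝ} (hq2 : 2 < q) (hpq : p < q) (hc : 0 < c) :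
    ∃ t ∈ Ioi x₃, t ^ p - (a + b * t + c * t ^ q) < 0 := by
  set G : ℝ → ℝ := fun x => x ^ (p-q) - a * x ^ (-q) - b * x ^ (1-q) - c with hG
  have hGlim : Tendsto G atTop (nhds (0 - a * 0 - b * 0 - c)) := by
    refine (((rpow_tendsto_zero_atTop (by linarith)).sub
      ((rpow_tendsto_zero_atTop (by linarith)).const_mul a)).sub
      ((rpow_tendsto_zero_atTop (by linarith)).const_mul b)).sub tendsto_const_nhds
  have hev1 : ∀ᶠ x in atTop, G x < -c/2 := hGlim.eventually_lt_const (by linarith)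
  have hev2 : ∀ᶠ x : ℝ in atTop, max x₃ 0 < x := eventually_gt_atTop _
  obtain ⟨t, ht1, ht2⟩ := (hev1.and hev2).exists
  have htpos : 0 < t := (le_max_right x₃ 0).trans_lt ht2
  have hFG : t ^ p - (a + b * t + c * t ^ q) = t ^ q * G t := by
    have i1 : t ^ q * t ^ (p-q) = t ^ p := by
      rw [← Real.rpow_add htpos]; ring_nf
    have i2 : t ^ q * t ^ (-q) = 1 := by
      rw [← Real.rpow_add htpos]; norm_num
    have i3 : t ^ q * t ^ (1-q) = t := by
      rw [← Real.rpow_add htpos]; norm_num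
    simp only [hG]
    rw [show t ^ q * (t ^ (p-q) - a * t ^ (-q) - b * t ^ (1-q) - c) =
      t ^ q * t ^ (p-q) - a * (t ^ q * t ^ (-q)) - b * (t ^ q * t ^ (1-q)) - c * t ^ q by ring,
      i1, i2, i3]
    ring
  refine ⟨t, (le_max_left x₃ 0).trans_lt ht2, ?_⟩
  rw [hFG]
  have : G t < 0 := lt_trans ht1 (by linarith)
  exact mul_neg_of_pos_of_neg (Real.rpow_pos_of_pos htpos q) this

/-- Case 0 < p < 1 : F is negative somewhere in (0, x₁). -/
lemma sample_small_p {p q x₁ x₂ x₃ a b c : ℝ} (hq2 : 2 < q) (hp0 : 0 < p) (hp1 : p < 1)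
    (h1 : 0 < x₁) (h12 : x₁ < x₂) (h23 : x₂ < x₃)
    (e₁ : x₁ ^ p - (a + b * x₁ + c * x₁ ^ q) = 0)
    (e₂ : x₂ ^ p - (a + b * x₂ + c * x₂ ^ q) = 0)
    (e₃ : x₃ ^ p - (a + b * x₃ + c * x₃ ^ q) = 0) :
    ∃ t ∈ Ioo 0 x₁, t ^ p - (a + b * t + c * t ^ q) < 0 := by
  have hq0 : (0:ℝ) < q := by linarith
  have hq1 : (1:ℝ) < q := by linarith
  have h2 : 0 < x₂ := h1.trans h12
  have h3 : 0 < x₃ := h2.trans h23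
  set D : ℝ → ℝ := fun x => p * x ^ (p-1) - (b + c * (q * x ^ (q-1))) with hD
  have hd := fun x (hx : (0:ℝ) < x) => hasDerivAt_F p q a b c hx
  obtain ⟨s₁, hs₁, k₁⟩ := rolle_pos hd h1 h12 e₁ e₂
  obtain ⟨s₂, hs₂, k₂⟩ := rolle_pos hd h2 h23 e₂ e₃
  have hDnz : ∀ t ∈ Ioc (0:ℝ) x₁, D t ≠ 0 := by
    intro t ht hDt
    exact deriv_form_zeros hq0 (ne_of_gt hp0) (ne_of_lt hp1) (by linarith) hq1 b c ht.1
      (lt_of_le_of_lt ht.2 hs₁.1) (hs₁.2.trans hs₂.1) hDt k₁ k₂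
  -- φ := x^(1-p) scaling of D tends to p > 0 at 0⁺
  have hφlim : Tendsto (fun x : ℝ => p - b * x ^ (1-p) - c * q * x ^ (q-p))
      (nhdsWithin 0 (Ioi 0)) (nhds (p - b * 0 - c * q * 0)) :=
    (tendsto_const_nhds.sub ((rpow_tendsto_zero (by linarith)).const_mul b)).sub
      ((rpow_tendsto_zero (by linarith)).const_mul (c * q))
  have hev1 : ∀ᶠ x in nhdsWithin 0 (Ioi 0), 0 < p - b * x ^ (1-p) - c * q * x ^ (q-p) :=
    hφlim.eventually_const_lt (by simpa using hp0)
  have hev2 : Ioo (0:ℝ) x₁ ∈ nhdsWithin 0 (Ioi 0) := Ioo_mem_nhdsGT_of_mem ⟨le_refl 0, h1⟩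
  obtain ⟨t₀, ht₀, hφt₀⟩ := ((Filter.eventually_of_mem hev2 (fun x hx => hx)).and hev1).exists
  have hDt₀ : 0 < D t₀ := by
    have htp : 0 < t₀ := ht₀.1
    have iden : D t₀ = t₀ ^ (p-1) * (p - b * t₀ ^ (1-p) - c * q * t₀ ^ (q-p)) := by
      have i1 : t₀ ^ (p-1) * t₀ ^ (1-p) = 1 := by
        rw [← Real.rpow_add htp]; norm_num
      have i2 : t₀ ^ (p-1) * t₀ ^ (q-p) = t₀ ^ (q-1) := by
        rw [← Real.rpow_add htp]; ring_nf
      simp only [hD]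
      rw [show t₀ ^ (p-1) * (p - b * t₀ ^ (1-p) - c * q * t₀ ^ (q-p)) =
        p * t₀ ^ (p-1) - b * (t₀ ^ (p-1) * t₀ ^ (1-p)) - c * q * (t₀ ^ (p-1) * t₀ ^ (q-p)) by ring,
        i1, i2]
      ring
    rw [iden]
    exact mul_pos (Real.rpow_pos_of_pos htp _) hφt₀
  -- D is continuous and nonzero on Ioc 0 x₁, hence positive there
  have hDcont : ContinuousOn D (Ioi 0) := by
    exact (continuousOn_const.mul (contOn_rpow (p-1))).sub
      (continuousOn_const.add (continuousOn_const.mul (continuousOn_const.mul (contOn_rpow (q-1)))))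
  have hsub : Ioc (0:ℝ) x₁ ⊆ Ioi 0 := fun x hx => hx.1
  have hDpos : ∀ x ∈ Ioc (0:ℝ) x₁, 0 < D x := fun x hx =>
    sign_const hDcont Set.ordConnected_Ioc hsub hDnz ⟨ht₀.1, ht₀.2.le⟩ hx hDt₀
  -- F strictly monotone on Ioc 0 x₁
  have hmono : StrictMonoOn (fun x : ℝ => x ^ p - (a + b * x + c * x ^ q)) (Ioc 0 x₁) := by
    refine strictMonoOn_of_deriv_pos (convex_Ioc 0 x₁) ((contOn_F p q a b c).mono hsub) ?_
    intro x hx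
    rw [interior_Ioc] at hx
    rw [(hasDerivAt_F p q a b c hx.1).deriv]
    exact hDpos x ⟨hx.1, hx.2.le⟩
  refine ⟨x₁/2, ⟨by linarith, by linarith⟩, ?_⟩
  have h5 := hmono (show x₁/2 ∈ Ioc 0 x₁ from ⟨by linarith, by linarith⟩)
    (show x₁ ∈ Ioc 0 x₁ from ⟨h1, le_refl x₁⟩) (by linarith)
  simp only at h5
  linarith [e₁, h5]

theorem stmt_15 (p q x₁ x₂ x₃ : ℝ) (hq : 2 < q) (hp : -1 < p)
    (hp0 : p ≠ 0) (hp1 : p ≠ 1) (hpq : p ≠ q)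
    (h1 : 0 < x₁) (h12 : x₁ < x₂) (h23 : x₂ < x₃) :
    (∃! v : ℝ × ℝ × ℝ,
      ∀ x : ℝ, 0 < x →
        (x ^ p - (v.1 + v.2.1 * x + v.2.2 * x ^ q) = 0 ↔ x = x₁ ∨ x = x₂ ∨ x = x₃)) ∧
    ∀ α β γ : ℝ,
      (∀ x : ℝ, 0 < x →
        (x ^ p - (α + β * x + γ * x ^ q) = 0 ↔ x = x₁ ∨ x = x₂ ∨ x = x₃)) →
      ((p < 0 ∨ (1 < p ∧ p < q)) →
        (∀ x ∈ Set.Ioo 0 x₁, 0 < x ^ p - (α + β * x + γ * x ^ q)) ∧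
        (∀ x ∈ Set.Ioo x₁ x₂, x ^ p - (α + β * x + γ * x ^ q) < 0) ∧
        (∀ x ∈ Set.Ioo x₂ x₃, 0 < x ^ p - (α + β * x + γ * x ^ q)) ∧
        (∀ x ∈ Set.Ioi x₃, x ^ p - (α + β * x + γ * x ^ q) < 0)) ∧
      (((0 < p ∧ p < 1) ∨ q < p) →
        (∀ x ∈ Set.Ioo 0 x₁, x ^ p - (α + β * x + γ * x ^ q) < 0) ∧
        (∀ x ∈ Set.Ioo x₁ x₂, 0 < x ^ p - (α + β * x + γ * x ^ q)) ∧
        (∀ x ∈ Set.Ioo x₂ x₃, x ^ p - (α + β * x + γ * x ^ q) < 0) ∧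
        (∀ x ∈ Set.Ioi x₃, 0 < x ^ p - (α + β * x + γ * x ^ q))) := by
  have hq0 : (0:ℝ) < q := by linarith
  have hq1 : (1:ℝ) < q := by linarith
  have h2 : 0 < x₂ := h1.trans h12
  have h3 : 0 < x₃ := h2.trans h23
  constructor
  · -- existence and uniqueness
    obtain ⟨a, b, c, ha1, ha2, ha3⟩ :=
      interp_exists hq0 hq1 h1 h12 h23 (x₁ ^ p) (x₂ ^ p) (x₃ ^ p)
    have e₁ : x₁ ^ p - (a + b * x₁ + c * x₁ ^ q) = 0 := by rw [ha1]; ring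
    have e₂ : x₂ ^ p - (a + b * x₂ + c * x₂ ^ q) = 0 := by rw [ha2]; ring
    have e₃ : x₃ ^ p - (a + b * x₃ + c * x₃ ^ q) = 0 := by rw [ha3]; ring
    refine ⟨(a, b, c), ?_, ?_⟩
    · intro x hx
      constructor
      · intro hF0
        by_contra hno
        push_neg at hno
        obtain ⟨n1, n2, n3⟩ := hno
        rcases lt_trichotomy x x₁ with hx1 | hx1 | hx1
        · exact F_four_zeros hq0 hp0 hp1 hpq hq1 a b c hx hx1 h12 h23 hF0 e₁ e₂ e₃
        · exact n1 hx1
        rcases lt_trichotomy x x₂ with hx2 | hx2 | hx2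
        · exact F_four_zeros hq0 hp0 hp1 hpq hq1 a b c h1 hx1 hx2 h23 e₁ hF0 e₂ e₃
        · exact n2 hx2
        rcases lt_trichotomy x x₃ with hx3 | hx3 | hx3
        · exact F_four_zeros hq0 hp0 hp1 hpq hq1 a b c h1 h12 hx2 hx3 e₁ e₂ hF0 e₃
        · exact n3 hx3
        · exact F_four_zeros hq0 hp0 hp1 hpq hq1 a b c h1 h12 h23 hx3 e₁ e₂ e₃ hF0
      · rintro (rfl | rfl | rfl) <;> assumption
    · intro w hw
      have w₁ := (hw x₁ h1).mpr (Or.inl rfl)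
      have w₂ := (hw x₂ h2).mpr (Or.inr (Or.inl rfl))
      have w₃ := (hw x₃ h3).mpr (Or.inr (Or.inr rfl))
      have d₁ : (w.1 - a) + (w.2.1 - b) * x₁ + (w.2.2 - c) * x₁ ^ q = 0 := by linarith
      have d₂ : (w.1 - a) + (w.2.1 - b) * x₂ + (w.2.2 - c) * x₂ ^ q = 0 := by linarith
      have d₃ : (w.1 - a) + (w.2.1 - b) * x₃ + (w.2.2 - c) * x₃ ^ q = 0 := by linarith
      obtain ⟨ea, eb, ec⟩ := lin_three_zeros hq0 hq1 _ _ _ h1 h12 h23 d₁ d₂ d₃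
      have : w.1 = a := by linarith
      have hb : w.2.1 = b := by linarith
      have hc : w.2.2 = c := by linarith
      exact Prod.ext this (Prod.ext hb hc)
  · -- sign patterns
    intro α β γ hiff
    have e₁ : x₁ ^ p - (α + β * x₁ + γ * x₁ ^ q) = 0 := (hiff x₁ h1).mpr (Or.inl rfl)
    have e₂ : x₂ ^ p - (α + β * x₂ + γ * x₂ ^ q) = 0 := (hiff x₂ h2).mpr (Or.inr (Or.inl rfl))
    have e₃ : x₃ ^ p - (α + β * x₃ + γ * x₃ ^ q) = 0 := (hiff x₃ h3).mpr (Or.inr (Or.inr rfl))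
    have hpat := sign_pattern hq hp0 hp1 hpq h1 h12 h23 α β γ hiff
    constructor
    · rintro (hc | ⟨hc1, hc2⟩)
      · rcases hpat with pat | pat
        · exact pat
        exfalso
        obtain ⟨t, ht, htpos⟩ := sample_neg_p (a := α) (b := β) (c := γ) hc hq0 h1
        exact absurd htpos (by linarith [pat.1 t ht])
      · rcases hpat with pat | pat
        · exact pat
        exfalso
        have hcp : 0 < γ := c_pos hq hc1 hc2 h1 h12 h23 e₁ e₂ e₃
        obtain ⟨t, ht, htneg⟩ := sample_c_pos (a := α) (b := β) hq hc2 hcp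
        exact absurd htneg (by linarith [pat.2.2.2 t ht])
    · rintro (⟨hc1, hc2⟩ | hc)
      · rcases hpat with pat | pat
        · exfalso
          obtain ⟨t, ht, htneg⟩ := sample_small_p hq hc1 hc2 h1 h12 h23 e₁ e₂ e₃
          exact absurd htneg (by linarith [pat.1 t ht])
        · exact pat
      · rcases hpat with pat | pat
        · exfalso
          obtain ⟨t, ht, htpos⟩ := sample_big_p (a := α) (b := β) (c := γ) (x₃ := x₃) hq hc
          exact absurd htpos (by linarith [pat.2.2.2 t ht])
        · exact pat
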